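/- Let M=(E,𝓘) be a matroid with m = r_M(E), let X be a totally ordered set, and let ℓ : E → X be an injective labeling function. Then χ̃_M = Σ_{F ⊆ E, F contains no broken circuit of M as a subset} (−1)^{|F|} x^{m − |F|} in ℤ[x]. -/

import Mathlib

open scoped Classical

noncomputable section

/-- The rank function of the matroid `(E, 𝓘)` (with ground set the whole type `α`):
`r_M(S) = max { |Z| : Z ∈ 𝓘, Z ⊆ S }`. -/
def mrank {α : Type*} [DecidableEq α] (𝓘 : Finset (Finset α)) (S : Finset α) : ℕ :=
  (𝓘.filter fun Z => Z ⊆ S).sup Finset.card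

/-- `T` is a flat of the matroid `(E, 𝓘)`: for some `k`, the set `T` has rank `k` and is
maximal (under inclusion) among subsets of the ground set of rank `k`. -/
def IsFlat {α : Type*} [DecidableEq α] (𝓘 : Finset (Finset α)) (T : Finset α) : Prop :=
  ∃ k, mrank 𝓘 T = k ∧ ∀ W : Finset α, mrank 𝓘 W = k → T ⊆ W → W = T

/-- `C` is a circuit of the matroid `(E, 𝓘)`: a minimal element of `𝒫(E) ∖ 𝓘`. -/
def IsCircuitM {α : Type*} (𝓘 : Finset (Finset α)) (C : Finset α) : Prop :=
  C ∉ 𝓘 ∧ ∀ D : Finset α, D ∉ 𝓘 → D ⊆ C → D = C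

/-- The closure `T̄` of `T`: the intersection of all flats of the matroid containing
`T`. -/
def mclosure {α : Type*} [Fintype α] [DecidableEq α] (𝓘 : Finset (Finset α))
    (T : Finset α) : Finset α :=
  Finset.univ.filter fun x => ∀ G : Finset α, IsFlat 𝓘 G → T ⊆ G → x ∈ G

/-- A broken circuit of the matroid `(E, 𝓘)` (with respect to the labeling function
`ℓ`): a set of the form `C \ {e}`, where `C` is a circuit of `M` and `e` is the unique
element of `C` attaining the maximum label among the elements of `C`. -/
def IsBrokenCircuitM {α X : Type*} [LinearOrder X] (𝓘 : Finset (Finset α))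
    (ℓ : α → X) (K : Finset α) : Prop :=
  ∃ C e, IsCircuitM 𝓘 C ∧ e ∈ C ∧ (∀ e' ∈ C, e' ≠ e → ℓ e' < ℓ e) ∧ K = C.erase e


namespace BC
open Finset
variable {α : Type*} [DecidableEq α] {𝓘 : Finset (Finset α)} {S T Z B B0 : Finset α} {x : α}

theorem indep_card_le (hZ : Z ∈ 𝓘) (hZS : Z ⊆ S) : Z.card ≤ mrank 𝓘 S :=
  Finset.le_sup (by simp [hZ, hZS])

theorem mrank_le {n : ℕ} (h : ∀ Z ∈ 𝓘, Z ⊆ S → Z.card ≤ n) : mrank 𝓘 S ≤ n :=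
  Finset.sup_le (fun W hW => by simp only [mem_filter] at hW; exact h W hW.1 hW.2)

theorem mrank_mono (h : S ⊆ T) : mrank 𝓘 S ≤ mrank 𝓘 T :=
  mrank_le (fun Z hZ hZS => indep_card_le hZ (hZS.trans h))

theorem mrank_le_card : mrank 𝓘 S ≤ S.card :=
  mrank_le (fun Z _ hZS => card_le_card hZS)

theorem mrank_empty : mrank 𝓘 (∅ : Finset α) = 0 :=
  Nat.le_zero.mp (le_trans mrank_le_card (by simp))

theorem exists_basis (h1 : ∅ ∈ 𝓘) (S : Finset α) :
    ∃ B, B ∈ 𝓘 ∧ B ⊆ S ∧ B.card = mrank 𝓘 S := by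
  have hne : (𝓘.filter fun Z => Z ⊆ S).Nonempty := ⟨∅, by simp [h1]⟩
  obtain ⟨B, hB, hBe⟩ := Finset.exists_mem_eq_sup _ hne Finset.card
  simp only [mem_filter] at hB
  exact ⟨B, hB.1, hB.2, hBe.symm⟩

theorem mrank_indep (h : S ∈ 𝓘) : mrank 𝓘 S = S.card :=
  le_antisymm mrank_le_card (indep_card_le h (subset_refl S))

theorem basis_extend (h1 : ∅ ∈ 𝓘)
    (h3 : ∀ Y ∈ 𝓘, ∀ Z ∈ 𝓘, Y.card < Z.card → ∃ x ∈ Z \ Y, insert x Y ∈ 𝓘)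
    (hB0 : B0 ∈ 𝓘) (hB0S : B0 ⊆ S) :
    ∃ B, B0 ⊆ B ∧ B ⊆ S ∧ B ∈ 𝓘 ∧ B.card = mrank 𝓘 S := by
  obtain ⟨n, hn⟩ : ∃ n, mrank 𝓘 S - B0.card = n := ⟨_, rfl⟩
  induction n generalizing B0 with
  | zero =>
    refine ⟨B0, subset_refl _, hB0S, hB0, ?_⟩
    have := indep_card_le hB0 hB0S
    omega
  | succ n ih =>
    obtain ⟨B1, hB1I, hB1S, hB1c⟩ := exists_basis h1 S
    have hlt : B0.card < B1.card := by
      have := indep_card_le hB0 hB0S; omega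
    obtain ⟨x, hx, hxI⟩ := h3 B0 hB0 B1 hB1I hlt
    have hxB0 : x ∉ B0 := (mem_sdiff.mp hx).2
    have hxS : insert x B0 ⊆ S := insert_subset (hB1S (mem_sdiff.mp hx).1) hB0S
    obtain ⟨B, hsub, hBS, hBI, hBc⟩ := ih hxI hxS (by
      rw [card_insert_of_notMem hxB0]; omega)
    exact ⟨B, (subset_insert _ _).trans hsub, hBS, hBI, hBc⟩

/-- `x` is spanned by `A`. -/
def Spans (𝓘 : Finset (Finset α)) (A : Finset α) (x : α) : Prop :=
  mrank 𝓘 (insert x A) = mrank 𝓘 A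

theorem spans_of_mem (h : x ∈ S) : Spans 𝓘 S x := by
  unfold Spans; rw [insert_eq_self.mpr h]

section Axioms
variable (h1 : ∅ ∈ 𝓘)
  (h2 : ∀ Y ∈ 𝓘, ∀ Z : Finset α, Z ⊆ Y → Z ∈ 𝓘)
  (h3 : ∀ Y ∈ 𝓘, ∀ Z ∈ 𝓘, Y.card < Z.card → ∃ x ∈ Z \ Y, insert x Y ∈ 𝓘)
include h1 h2 h3

theorem spans_mono (hST : S ⊆ T) (hx : Spans 𝓘 S x) : Spans 𝓘 T x := by
  obtain ⟨B0, hB0I, hB0S, hB0c⟩ := exists_basis h1 S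
  obtain ⟨B, hB0B, hBT, hBI, hBc⟩ := basis_extend h1 h3 hB0I (hB0S.trans hST)
  have hle : mrank 𝓘 (insert x T) ≤ B.card := by
    apply mrank_le
    intro Z hZI hZsub
    by_contra hc
    push_neg at hc
    obtain ⟨y, hy, hyI⟩ := h3 B hBI Z hZI hc
    have hyB : y ∉ B := (mem_sdiff.mp hy).2
    rcases mem_insert.mp (hZsub (mem_sdiff.mp hy).1) with hyx | hyT
    · subst hyx
      have hxB0 : y ∉ B0 := fun h => hyB (hB0B h)
      have hIxB0 : insert y B0 ∈ 𝓘 := h2 _ hyI _ (insert_subset_insert _ hB0B)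
      have := indep_card_le hIxB0 (insert_subset_insert _ hB0S : insert y B0 ⊆ insert y S)
      rw [card_insert_of_notMem hxB0, hB0c, hx] at this
      omega
    · have := indep_card_le hyI (insert_subset hyT hBT)
      rw [card_insert_of_notMem hyB, hBc] at this
      omega
  exact le_antisymm (hBc ▸ hle) (mrank_mono (subset_insert _ _))

theorem spans_insert_iff {e0 : α} (he0 : Spans 𝓘 B e0) :
    Spans 𝓘 (insert e0 B) x ↔ Spans 𝓘 B x := by
  have h4 : Spans 𝓘 (insert x B) e0 :=
    spans_mono h1 h2 h3 (subset_insert _ _) he0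
  unfold Spans at *
  rw [Finset.insert_comm, h4, he0]

end Axioms

/-- the closure as the set of spanned elements -/
def cl {α : Type*} [Fintype α] [DecidableEq α] (𝓘 : Finset (Finset α)) (S : Finset α) :
    Finset α := Finset.univ.filter fun x => Spans 𝓘 S x

section Closure
variable {α : Type*} [Fintype α] [DecidableEq α] {𝓘 : Finset (Finset α)} {S T W : Finset α} {x : α}
  (h1 : ∅ ∈ 𝓘)
  (h2 : ∀ Y ∈ 𝓘, ∀ Z : Finset α, Z ⊆ Y → Z ∈ 𝓘)
  (h3 : ∀ Y ∈ 𝓘, ∀ Z ∈ 𝓘, Y.card < Z.card → ∃ x ∈ Z \ Y, insert x Y ∈ 𝓘)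
include h1 h2 h3

theorem subset_cl : S ⊆ cl 𝓘 S := fun x hx => by
  simp [cl, spans_of_mem hx]

theorem mrank_cl : mrank 𝓘 (cl 𝓘 S) = mrank 𝓘 S := by
  obtain ⟨B, hBI, hBS, hBc⟩ := exists_basis h1 S
  refine le_antisymm ?_ (mrank_mono (subset_cl h1 h2 h3))
  rw [← hBc]
  apply mrank_le
  intro Z hZI hZsub
  by_contra hc
  push_neg at hc
  obtain ⟨y, hy, hyI⟩ := h3 B hBI Z hZI hc
  have hyB : y ∉ B := (mem_sdiff.mp hy).2
  have hyc : Spans 𝓘 S y := by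
    have := hZsub (mem_sdiff.mp hy).1
    simpa [cl] using this
  have := indep_card_le hyI (insert_subset_insert _ hBS : insert y B ⊆ insert y S)
  rw [card_insert_of_notMem hyB, hBc, hyc] at this
  omega

theorem cl_isFlat : IsFlat 𝓘 (cl 𝓘 S) := by
  refine ⟨mrank 𝓘 S, mrank_cl h1 h2 h3, fun W hW hsub => ?_⟩
  refine Subset.antisymm (fun x hx => ?_) hsub
  have hxS : insert x S ⊆ W := insert_subset hx ((subset_cl h1 h2 h3).trans hsub)
  have : mrank 𝓘 (insert x S) ≤ mrank 𝓘 S := le_trans (mrank_mono hxS) (le_of_eq hW)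
  have hsp : Spans 𝓘 S x := le_antisymm this (mrank_mono (subset_insert _ _))
  simp [cl, hsp]

theorem cl_subset_flat {G : Finset α} (hG : IsFlat 𝓘 G) (hSG : S ⊆ G) : cl 𝓘 S ⊆ G := by
  intro x hx
  have hsp : Spans 𝓘 S x := by simpa [cl] using hx
  have hspG : Spans 𝓘 G x := spans_mono h1 h2 h3 hSG hsp
  obtain ⟨k, hk, hmax⟩ := hG
  have := hmax (insert x G) (by rw [hspG, hk]) (subset_insert _ _)
  rw [← this]
  exact mem_insert_self _ _

theorem mclosure_eq_cl : mclosure 𝓘 S = cl 𝓘 S := by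
  apply Subset.antisymm
  · intro x hx
    simp only [mclosure, mem_filter, mem_univ, true_and] at hx
    exact hx _ (cl_isFlat h1 h2 h3) (subset_cl h1 h2 h3)
  · intro x hx
    simp only [mclosure, mem_filter, mem_univ, true_and]
    intro G hG hSG
    exact cl_subset_flat h1 h2 h3 hG hSG hx

end Closure

section Circuits
variable {α : Type*} [DecidableEq α] {𝓘 : Finset (Finset α)} {S C : Finset α} {x e : α}

theorem exists_circuit (hS : S ∉ 𝓘) : ∃ C, C ⊆ S ∧ IsCircuitM 𝓘 C := by
  have hne : (S.powerset.filter fun D => D ∉ 𝓘).Nonempty := ⟨S, by simp [hS]⟩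
  obtain ⟨C, hC, hCmin⟩ := Finset.exists_min_image _ Finset.card hne
  simp only [mem_filter, mem_powerset] at hC
  refine ⟨C, hC.1, hC.2, fun D hD hDC => ?_⟩
  refine Finset.eq_of_subset_of_card_le hDC ?_
  exact hCmin D (by simp [mem_filter, mem_powerset, hD, hDC.trans hC.1])

theorem circuit_nonempty (h1 : ∅ ∈ 𝓘) (hC : IsCircuitM 𝓘 C) : C.Nonempty := by
  rcases C.eq_empty_or_nonempty with h | h
  · exact absurd (h ▸ hC.1) (by simp [h1])
  · exact h

theorem circuit_erase_indep (hC : IsCircuitM 𝓘 C) (he : e ∈ C) : C.erase e ∈ 𝓘 := by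
  by_contra h
  have := hC.2 _ h (erase_subset _ _)
  exact (this ▸ notMem_erase e C) he

theorem circuit_spans_erase (hC : IsCircuitM 𝓘 C) (he : e ∈ C) :
    Spans 𝓘 (C.erase e) e := by
  have h1 : mrank 𝓘 C = C.card - 1 := by
    apply le_antisymm
    · apply mrank_le
      intro Z hZ hZC
      have : Z ≠ C := fun h => hC.1 (h ▸ hZ)
      have := Finset.card_lt_card (lt_of_le_of_ne hZC this)
      omega
    · have := indep_card_le (circuit_erase_indep hC he) (erase_subset _ _)
      rw [card_erase_of_mem he] at this
      exact this
  have h2 : mrank 𝓘 (C.erase e) = C.card - 1 := by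
    rw [mrank_indep (circuit_erase_indep hC he), card_erase_of_mem he]
  unfold Spans
  rw [insert_erase he, h1, h2]

theorem spans_circuit (h1 : ∅ ∈ 𝓘)
    (h2 : ∀ Y ∈ 𝓘, ∀ Z : Finset α, Z ⊆ Y → Z ∈ 𝓘)
    {A : Finset α} (hsp : Spans 𝓘 A x) (hxA : x ∉ A) :
    ∃ C, IsCircuitM 𝓘 C ∧ x ∈ C ∧ C.erase x ⊆ A := by
  obtain ⟨B, hBI, hBA, hBc⟩ := exists_basis h1 A
  have hxB : x ∉ B := fun h => hxA (hBA h)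
  have hdep : insert x B ∉ 𝓘 := by
    intro hI
    have := indep_card_le hI (insert_subset_insert _ hBA : insert x B ⊆ insert x A)
    rw [card_insert_of_notMem hxB, hBc, hsp] at this
    omega
  obtain ⟨C, hCsub, hC⟩ := exists_circuit hdep
  have hxC : x ∈ C := by
    by_contra hx
    have : C ⊆ B := fun y hy => by
      rcases mem_insert.mp (hCsub hy) with h | h
      · exact absurd (h ▸ hy) hx
      · exact h
    exact hC.1 (h2 B hBI C this)
  refine ⟨C, hC, hxC, fun y hy => ?_⟩
  have hyB : y ∈ B := by
    rcases mem_insert.mp (hCsub (mem_of_mem_erase hy)) with h | h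
    · exact absurd h (ne_of_mem_erase hy)
    · exact h
  exact hBA hyB

end Circuits

theorem erase_irrel {α : Type*} (i₁ i₂ : DecidableEq α) (C : Finset α) (e : α) :
    @Finset.erase α i₁ C e = @Finset.erase α i₂ C e := by
  congr!

section Dset
variable {α : Type*} [Fintype α] [DecidableEq α] {X : Type*} [LinearOrder X]

/-- elements of `S` with label below that of `e` -/
def below (ℓ : α → X) (S : Finset α) (e : α) : Finset α := S.filter fun s => ℓ s < ℓ e

def Dset (𝓘 : Finset (Finset α)) (ℓ : α → X) (S : Finset α) : Finset α :=
  Finset.univ.filter fun e => Spans 𝓘 (below ℓ S e) e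

variable {𝓘 : Finset (Finset α)} {ℓ : α → X} {S : Finset α} {e : α}
  (h1 : ∅ ∈ 𝓘)
  (h2 : ∀ Y ∈ 𝓘, ∀ Z : Finset α, Z ⊆ Y → Z ∈ 𝓘)
  (h3 : ∀ Y ∈ 𝓘, ∀ Z ∈ 𝓘, Y.card < Z.card → ∃ x ∈ Z \ Y, insert x Y ∈ 𝓘)

theorem below_subset_erase : below ℓ S e ⊆ S.erase e := fun y hy => by
  simp only [below, mem_filter] at hy
  exact mem_erase.mpr ⟨fun h => absurd (h ▸ hy.2) (lt_irrefl _), hy.1⟩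

include h1 h2 h3

theorem dset_nonempty_iff :
    (Dset 𝓘 ℓ S).Nonempty ↔ ∃ K, IsBrokenCircuitM 𝓘 ℓ K ∧ K ⊆ S := by
  constructor
  · rintro ⟨e, he⟩
    simp only [Dset, mem_filter, mem_univ, true_and] at he
    have hnotmem : e ∉ below ℓ S e := fun h => by
      simp only [below, mem_filter] at h; exact lt_irrefl _ h.2
    obtain ⟨C, hC, heC, hsub⟩ := spans_circuit h1 h2 he hnotmem
    refine ⟨C.erase e, ⟨C, e, hC, heC, fun e' he' hne => ?_, erase_irrel _ _ _ _⟩, ?_⟩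
    · have := hsub (mem_erase.mpr ⟨hne, he'⟩)
      simp only [below, mem_filter] at this
      exact this.2
    · exact hsub.trans ((filter_subset _ _))
  · rintro ⟨K, ⟨C, e, hC, heC, hmax, hK⟩, hKS⟩
    rw [hK, erase_irrel (fun a b => Classical.propDecidable (a = b)) ‹DecidableEq α› C e] at hKS
    refine ⟨e, ?_⟩
    simp only [Dset, mem_filter, mem_univ, true_and]
    have hsub : C.erase e ⊆ below ℓ S e := fun y hy => by
      simp only [below, mem_filter]
      exact ⟨hKS hy, hmax y (mem_of_mem_erase hy) (ne_of_mem_erase hy)⟩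
    exact spans_mono h1 h2 h3 hsub (circuit_spans_erase hC heC)

theorem nbc_indep (hℓ : Function.Injective ℓ)
    (h : ∀ K, IsBrokenCircuitM 𝓘 ℓ K → ¬ K ⊆ S) : S ∈ 𝓘 := by
  by_contra hS
  obtain ⟨C, hCS, hC⟩ := exists_circuit hS
  obtain ⟨e, heC, hmax⟩ := Finset.exists_max_image C ℓ (circuit_nonempty h1 hC)
  refine h (C.erase e) ⟨C, e, hC, heC, fun e' he' hne => ?_, erase_irrel _ _ _ _⟩
    ((erase_subset _ _).trans hCS)
  exact lt_of_le_of_ne (hmax e' he') (fun hl => hne (hℓ hl))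

end Dset

section Toggle
variable {α : Type*} [Fintype α] [DecidableEq α] [LinearOrder α] {X : Type*} [LinearOrder X]
  {𝓘 : Finset (Finset α)} {ℓ : α → X} {S : Finset α}

def toggle (𝓘 : Finset (Finset α)) (ℓ : α → X) (S : Finset α) : Finset α :=
  if h : (Dset 𝓘 ℓ S).Nonempty then
    (if (Dset 𝓘 ℓ S).min' h ∈ S then S.erase ((Dset 𝓘 ℓ S).min' h)
     else insert ((Dset 𝓘 ℓ S).min' h) S)
  else S

theorem card_toggle' (hne : (Dset 𝓘 ℓ S).Nonempty) :
    S.card = (toggle 𝓘 ℓ S).card + 1 ∨ (toggle 𝓘 ℓ S).card = S.card + 1 := by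
  unfold toggle
  rw [dif_pos hne]
  by_cases hmem : (Dset 𝓘 ℓ S).min' hne ∈ S
  · left
    rw [if_pos hmem, card_erase_of_mem hmem]
    have := card_pos.mpr ⟨_, hmem⟩
    omega
  · right
    rw [if_neg hmem, card_insert_of_notMem hmem]

variable (h1 : ∅ ∈ 𝓘)
  (h2 : ∀ Y ∈ 𝓘, ∀ Z : Finset α, Z ⊆ Y → Z ∈ 𝓘)
  (h3 : ∀ Y ∈ 𝓘, ∀ Z ∈ 𝓘, Y.card < Z.card → ∃ x ∈ Z \ Y, insert x Y ∈ 𝓘)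
include h1 h2 h3

theorem spans_erase_min (hne : (Dset 𝓘 ℓ S).Nonempty) :
    Spans 𝓘 (S.erase ((Dset 𝓘 ℓ S).min' hne)) ((Dset 𝓘 ℓ S).min' hne) := by
  have hm := Finset.min'_mem _ hne
  simp only [Dset, mem_filter, mem_univ, true_and] at hm
  exact spans_mono h1 h2 h3 below_subset_erase hm

theorem mrank_toggle (hne : (Dset 𝓘 ℓ S).Nonempty) :
    mrank 𝓘 (toggle 𝓘 ℓ S) = mrank 𝓘 S := by
  set e0 := (Dset 𝓘 ℓ S).min' hne with he0
  have hsp : Spans 𝓘 (S.erase e0) e0 := spans_erase_min h1 h2 h3 hne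
  unfold toggle
  rw [dif_pos hne]
  by_cases hmem : e0 ∈ S
  · rw [if_pos hmem]
    conv_rhs => rw [← insert_erase hmem]
    exact hsp.symm
  · rw [if_neg hmem]
    have : S.erase e0 = S := erase_eq_of_notMem hmem
    rw [this] at hsp
    exact hsp

theorem below_toggle_of_le (hne : (Dset 𝓘 ℓ S).Nonempty) {e : α}
    (h : ¬ ℓ ((Dset 𝓘 ℓ S).min' hne) < ℓ e) :
    below ℓ (toggle 𝓘 ℓ S) e = below ℓ S e := by
  set e0 := (Dset 𝓘 ℓ S).min' hne with he0
  have key : e0 ∉ below ℓ S e := fun hm => by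
    simp only [below, mem_filter] at hm; exact h hm.2
  unfold toggle
  rw [dif_pos hne]
  by_cases hmem : e0 ∈ S
  · rw [if_pos hmem]
    show Finset.filter _ _ = _
    rw [show (S.erase e0).filter (fun s => ℓ s < ℓ e) = (S.filter fun s => ℓ s < ℓ e).erase e0
      from Finset.filter_erase _ _ _]
    exact erase_eq_of_notMem key
  · rw [if_neg hmem]
    show Finset.filter _ _ = _
    rw [Finset.filter_insert]
    rw [if_neg (fun hc => h hc)]
    rfl

theorem dset_toggle (hne : (Dset 𝓘 ℓ S).Nonempty) :
    Dset 𝓘 ℓ (toggle 𝓘 ℓ S) = Dset 𝓘 ℓ S := by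
  set e0 := (Dset 𝓘 ℓ S).min' hne with he0
  have hm := Finset.min'_mem _ hne
  have hsp0 : Spans 𝓘 (below ℓ S e0) e0 := by
    exact (Finset.mem_filter.mp hm).2
  ext e
  simp only [Dset, mem_filter, mem_univ, true_and]
  by_cases hlt : ℓ e0 < ℓ e
  · set B := (below ℓ S e).erase e0 with hB
    have hBsp : Spans 𝓘 B e0 := by
      refine spans_mono h1 h2 h3 ?_ hsp0
      intro y hy
      simp only [below, mem_filter] at hy
      refine mem_erase.mpr ⟨fun hc => absurd (hc ▸ hy.2) (lt_irrefl _), ?_⟩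
      simp only [below, mem_filter]
      exact ⟨hy.1, hy.2.trans hlt⟩
    have hS' : below ℓ (toggle 𝓘 ℓ S) e = (if e0 ∈ S then B else insert e0 B) := by
      unfold toggle
      rw [dif_pos hne, ← he0]
      by_cases hmem : e0 ∈ S
      · rw [if_pos hmem, if_pos hmem]
        show Finset.filter _ _ = _
        rw [show (S.erase e0).filter (fun s => ℓ s < ℓ e) =
          (S.filter fun s => ℓ s < ℓ e).erase e0 from Finset.filter_erase _ _ _, hB]
        rfl
      · have hm0 : e0 ∉ below ℓ S e := fun hc => hmem (mem_filter.mp hc).1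
        rw [if_neg hmem, if_neg hmem]
        show Finset.filter _ _ = _
        rw [Finset.filter_insert, if_pos hlt, hB, erase_eq_of_notMem hm0]
        rfl
    have hSe : below ℓ S e = (if e0 ∈ S then insert e0 B else B) := by
      by_cases hmem : e0 ∈ S
      · have hm0 : e0 ∈ below ℓ S e := mem_filter.mpr ⟨hmem, hlt⟩
        rw [if_pos hmem, hB, insert_erase hm0]
      · have hm0 : e0 ∉ below ℓ S e := fun hc => hmem (mem_filter.mp hc).1
        rw [if_neg hmem, hB, erase_eq_of_notMem hm0]
    rw [hS', hSe]
    by_cases hmem : e0 ∈ S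
    · rw [if_pos hmem, if_pos hmem]
      exact (spans_insert_iff h1 h2 h3 hBsp).symm
    · rw [if_neg hmem, if_neg hmem]
      exact spans_insert_iff h1 h2 h3 hBsp
  · rw [below_toggle_of_le h1 h2 h3 hne hlt]

theorem toggle_toggle (hne : (Dset 𝓘 ℓ S).Nonempty) :
    toggle 𝓘 ℓ (toggle 𝓘 ℓ S) = S := by
  have hd := dset_toggle h1 h2 h3 hne
  have hne' : (Dset 𝓘 ℓ (toggle 𝓘 ℓ S)).Nonempty := by rw [hd]; exact hne
  set e0 := (Dset 𝓘 ℓ S).min' hne with he0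
  have hmin' : (Dset 𝓘 ℓ (toggle 𝓘 ℓ S)).min' hne' = e0 := by
    simp only [hd, he0]
  conv_lhs => rw [toggle]
  rw [dif_pos hne', hmin']
  by_cases hmem : e0 ∈ S
  · have ht : toggle 𝓘 ℓ S = S.erase e0 := by
      unfold toggle; rw [dif_pos hne, ← he0, if_pos hmem]
    rw [ht, if_neg (notMem_erase _ _), insert_erase hmem]
  · have ht : toggle 𝓘 ℓ S = insert e0 S := by
      unfold toggle; rw [dif_pos hne, ← he0, if_neg hmem]
    rw [ht, if_pos (mem_insert_self _ _), erase_insert hmem]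

end Toggle
end BC
namespace BC
open Finset

section Sums
variable {α : Type*} [Fintype α] [DecidableEq α] [LinearOrder α] {X : Type*} [LinearOrder X]
  {𝓘 : Finset (Finset α)} {ℓ : α → X}
  (h1 : ∅ ∈ 𝓘)
  (h2 : ∀ Y ∈ 𝓘, ∀ Z : Finset α, Z ⊆ Y → Z ∈ 𝓘)
  (h3 : ∀ Y ∈ 𝓘, ∀ Z ∈ 𝓘, Y.card < Z.card → ∃ x ∈ Z \ Y, insert x Y ∈ 𝓘)
  (hℓ : Function.Injective ℓ)
include h1 h2 h3

theorem key_iff (S : Finset α) :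
    (¬ ∀ K, IsBrokenCircuitM 𝓘 ℓ K → ¬ K ⊆ S) ↔ (Dset 𝓘 ℓ S).Nonempty := by
  rw [dset_nonempty_iff h1 h2 h3]
  push_neg
  simp only [exists_prop]

theorem sum_bad_zero :
    ∑ S ∈ Finset.univ.filter
      (fun S : Finset α => ¬ ∀ K, IsBrokenCircuitM 𝓘 ℓ K → ¬ K ⊆ S),
      (-1 : Polynomial ℤ) ^ S.card * Polynomial.X ^ (mrank 𝓘 Finset.univ - mrank 𝓘 S)
      = 0 := by
  refine Finset.sum_involution (fun S _ => toggle 𝓘 ℓ S) ?_ ?_ ?_ ?_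
  · intro S hS
    have hne : (Dset 𝓘 ℓ S).Nonempty := by
      rw [← key_iff h1 h2 h3]
      simpa using hS
    rw [mrank_toggle h1 h2 h3 hne]
    rcases card_toggle' hne with h | h
    · rw [h, pow_succ]; ring
    · rw [h, pow_succ]; ring
  · intro S hS _
    have hne : (Dset 𝓘 ℓ S).Nonempty := by
      rw [← key_iff h1 h2 h3]
      simpa using hS
    intro he
    have he' : toggle 𝓘 ℓ S = S := he
    rcases card_toggle' hne with h | h <;> rw [he'] at h <;> omega
  · intro S hS
    have hne : (Dset 𝓘 ℓ S).Nonempty := by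
      rw [← key_iff h1 h2 h3]
      simpa using hS
    simp only [mem_filter, mem_univ, true_and]
    rw [key_iff h1 h2 h3, dset_toggle h1 h2 h3 hne]
    exact hne
  · intro S hS
    have hne : (Dset 𝓘 ℓ S).Nonempty := by
      rw [← key_iff h1 h2 h3]
      simpa using hS
    exact toggle_toggle h1 h2 h3 hne

include hℓ

theorem whitney_sum :
    ∑ S ∈ (Finset.univ : Finset (Finset α)),
      (-1 : Polynomial ℤ) ^ S.card * Polynomial.X ^ (mrank 𝓘 Finset.univ - mrank 𝓘 S)
    = ∑ F ∈ Finset.univ.filter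
        (fun F : Finset α => ∀ K, IsBrokenCircuitM 𝓘 ℓ K → ¬ K ⊆ F),
        (-1 : Polynomial ℤ) ^ F.card *
          Polynomial.X ^ (mrank 𝓘 Finset.univ - F.card) := by
  rw [← Finset.sum_filter_add_sum_filter_not Finset.univ
    (fun F : Finset α => ∀ K, IsBrokenCircuitM 𝓘 ℓ K → ¬ K ⊆ F)
    (fun S => (-1 : Polynomial ℤ) ^ S.card *
      Polynomial.X ^ (mrank 𝓘 Finset.univ - mrank 𝓘 S)),
    sum_bad_zero h1 h2 h3, add_zero]
  refine Finset.sum_congr rfl (fun F hF => ?_)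
  simp only [mem_filter, mem_univ, true_and] at hF
  rw [mrank_indep (nbc_indep h1 h2 h3 hℓ hF)]

end Sums

section Mobius
variable {α : Type*} [Fintype α] [DecidableEq α]
  {𝓘 : Finset (Finset α)}
  (h1 : ∅ ∈ 𝓘)
  (h2 : ∀ Y ∈ 𝓘, ∀ Z : Finset α, Z ⊆ Y → Z ∈ 𝓘)
  (h3 : ∀ Y ∈ 𝓘, ∀ Z ∈ 𝓘, Y.card < Z.card → ∃ x ∈ Z \ Y, insert x Y ∈ 𝓘)
include h1 h2 h3

theorem subset_mclosure {S : Finset α} : S ⊆ mclosure 𝓘 S := by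
  rw [mclosure_eq_cl h1 h2 h3]
  exact subset_cl h1 h2 h3

theorem mu_fiber (hcl : mclosure 𝓘 ∅ = ∅)
    (μ : Finset α → Finset α → ℤ)
    (hμ1 : ∀ T : Finset α, IsFlat 𝓘 T → μ T T = 1)
    (hμ2 : ∀ T S : Finset α, IsFlat 𝓘 T → IsFlat 𝓘 S → T ⊂ S →
      μ T S = -∑ Z ∈ Finset.univ.filter (fun Z : Finset α => IsFlat 𝓘 Z ∧ T ⊆ Z ∧ Z ⊂ S),
        μ T Z) :
    ∀ F : Finset α, IsFlat 𝓘 F →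
      μ ∅ F = ∑ S ∈ Finset.univ.filter (fun S : Finset α => mclosure 𝓘 S = F),
        (-1 : ℤ) ^ S.card := by
  have hflat0 : IsFlat 𝓘 (∅ : Finset α) := by
    have := cl_isFlat h1 h2 h3 (S := (∅ : Finset α))
    rwa [← mclosure_eq_cl h1 h2 h3, hcl] at this
  have base : μ ∅ ∅ = ∑ S ∈ Finset.univ.filter
      (fun S : Finset α => mclosure 𝓘 S = (∅ : Finset α)), (-1 : ℤ) ^ S.card := by
    have hfib : Finset.univ.filter (fun S : Finset α => mclosure 𝓘 S = (∅ : Finset α))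
        = {∅} := by
      ext S
      simp only [mem_filter, mem_univ, true_and, mem_singleton]
      constructor
      · intro h
        exact subset_empty.mp (h ▸ subset_mclosure h1 h2 h3)
      · rintro rfl
        exact hcl
    rw [hfib, Finset.sum_singleton, Finset.card_empty, pow_zero, hμ1 _ hflat0]
  suffices h : ∀ n, ∀ F : Finset α, F.card ≤ n → IsFlat 𝓘 F →
      μ ∅ F = ∑ S ∈ Finset.univ.filter (fun S : Finset α => mclosure 𝓘 S = F),
        (-1 : ℤ) ^ S.card by
    exact fun F hF => h F.card F le_rfl hF
  intro n
  induction n with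
  | zero =>
    intro F hFc hF
    have : F = ∅ := card_eq_zero.mp (Nat.le_zero.mp hFc)
    subst this
    exact base
  | succ n ih =>
    intro F hFc hF
    rcases eq_or_ne F ∅ with rfl | hFne
    · exact base
    · have h0F : (∅ : Finset α) ⊂ F :=
        Finset.ssubset_iff_subset_ne.mpr ⟨empty_subset _, Ne.symm hFne⟩
      rw [hμ2 ∅ F hflat0 hF h0F]
      rw [Finset.sum_congr rfl (fun Z hZ => by
        simp only [mem_filter, mem_univ, true_and] at hZ
        have hZc : Z.card ≤ n := by
          have := Finset.card_lt_card hZ.2.2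
          omega
        exact ih Z hZc hZ.1)]
      -- now: -∑_{Z flat, Z ⊂ F} g Z = g F
      have hA : Finset.univ.filter (fun Z : Finset α => IsFlat 𝓘 Z ∧ ∅ ⊆ Z ∧ Z ⊂ F)
          = (Finset.univ.filter (fun Z : Finset α => IsFlat 𝓘 Z ∧ Z ⊆ F)).erase F := by
        ext Z
        simp only [mem_filter, mem_erase, mem_univ, true_and, empty_subset, true_and]
        constructor
        · rintro ⟨hZf, hZss⟩
          exact ⟨(Finset.ssubset_iff_subset_ne.mp hZss).2, hZf, hZss.subset⟩
        · rintro ⟨hne, hZf, hsub⟩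
          exact ⟨hZf, Finset.ssubset_iff_subset_ne.mpr ⟨hsub, hne⟩⟩
      have hFmem : F ∈ Finset.univ.filter (fun Z : Finset α => IsFlat 𝓘 Z ∧ Z ⊆ F) := by
        simp [hF]
      have htot : ∑ Z ∈ Finset.univ.filter (fun Z : Finset α => IsFlat 𝓘 Z ∧ Z ⊆ F),
          (∑ S ∈ Finset.univ.filter (fun S : Finset α => mclosure 𝓘 S = Z),
            (-1 : ℤ) ^ S.card) = 0 := by
        have hmaps : ∀ S ∈ F.powerset, mclosure 𝓘 S ∈
            Finset.univ.filter (fun Z : Finset α => IsFlat 𝓘 Z ∧ Z ⊆ F) := by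
          intro S hS
          simp only [mem_powerset] at hS
          simp only [mem_filter, mem_univ, true_and]
          rw [mclosure_eq_cl h1 h2 h3]
          exact ⟨cl_isFlat h1 h2 h3, cl_subset_flat h1 h2 h3 hF hS⟩
        have hfib := Finset.sum_fiberwise_of_maps_to hmaps (fun S => (-1 : ℤ) ^ S.card)
        have hfix : ∀ Z ∈ Finset.univ.filter (fun Z : Finset α => IsFlat 𝓘 Z ∧ Z ⊆ F),
            (∑ S ∈ F.powerset.filter (fun S => mclosure 𝓘 S = Z), (-1 : ℤ) ^ S.card)
            = ∑ S ∈ Finset.univ.filter (fun S : Finset α => mclosure 𝓘 S = Z),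
                (-1 : ℤ) ^ S.card := by
          intro Z hZ
          simp only [mem_filter, mem_univ, true_and] at hZ
          refine Finset.sum_congr ?_ (fun _ _ => rfl)
          ext S
          simp only [mem_filter, mem_powerset, mem_univ, true_and]
          constructor
          · rintro ⟨_, h⟩; exact h
          · intro h
            refine ⟨?_, h⟩
            have hsub : S ⊆ mclosure 𝓘 S := subset_mclosure h1 h2 h3
            rw [h] at hsub
            exact hsub.trans hZ.2
        rw [Finset.sum_congr rfl hfix] at hfib
        rw [hfib, Finset.sum_powerset_neg_one_pow_card, if_neg hFne]
      have hsplit := Finset.add_sum_erase _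
        (fun Z => ∑ S ∈ Finset.univ.filter (fun S : Finset α => mclosure 𝓘 S = Z),
          (-1 : ℤ) ^ S.card) hFmem
      rw [hA]
      rw [htot] at hsplit
      linarith
end Mobius
end BC
namespace BC
open Finset
section MobiusSide
variable {α : Type*} [Fintype α] [DecidableEq α]
  {𝓘 : Finset (Finset α)}
  (h1 : ∅ ∈ 𝓘)
  (h2 : ∀ Y ∈ 𝓘, ∀ Z : Finset α, Z ⊆ Y → Z ∈ 𝓘)
  (h3 : ∀ Y ∈ 𝓘, ∀ Z ∈ 𝓘, Y.card < Z.card → ∃ x ∈ Z \ Y, insert x Y ∈ 𝓘)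
include h1 h2 h3

theorem mobius_side (hcl : mclosure 𝓘 ∅ = ∅)
    (μ : Finset α → Finset α → ℤ)
    (hμ1 : ∀ T : Finset α, IsFlat 𝓘 T → μ T T = 1)
    (hμ2 : ∀ T S : Finset α, IsFlat 𝓘 T → IsFlat 𝓘 S → T ⊂ S →
      μ T S = -∑ Z ∈ Finset.univ.filter (fun Z : Finset α => IsFlat 𝓘 Z ∧ T ⊆ Z ∧ Z ⊂ S),
        μ T Z) :
    ∑ F ∈ Finset.univ.filter (fun F : Finset α => IsFlat 𝓘 F),
      Polynomial.C (μ (mclosure 𝓘 ∅) F) *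
        Polynomial.X ^ (mrank 𝓘 Finset.univ - mrank 𝓘 F)
    = ∑ S ∈ (Finset.univ : Finset (Finset α)),
        (-1 : Polynomial ℤ) ^ S.card *
          Polynomial.X ^ (mrank 𝓘 Finset.univ - mrank 𝓘 S) := by
  have hmaps : ∀ S ∈ (Finset.univ : Finset (Finset α)),
      mclosure 𝓘 S ∈ Finset.univ.filter (fun F : Finset α => IsFlat 𝓘 F) := by
    intro S _
    simp only [mem_filter, mem_univ, true_and]
    rw [mclosure_eq_cl h1 h2 h3]
    exact cl_isFlat h1 h2 h3
  rw [← Finset.sum_fiberwise_of_maps_to hmaps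
    (fun S => (-1 : Polynomial ℤ) ^ S.card *
      Polynomial.X ^ (mrank 𝓘 Finset.univ - mrank 𝓘 S))]
  refine Finset.sum_congr rfl (fun F hF => ?_)
  simp only [mem_filter, mem_univ, true_and] at hF
  rw [hcl, mu_fiber h1 h2 h3 hcl μ hμ1 hμ2 F hF, map_sum, Finset.sum_mul]
  refine Finset.sum_congr rfl (fun S hS => ?_)
  simp only [mem_filter, mem_univ, true_and] at hS
  have hr : mrank 𝓘 S = mrank 𝓘 F := by
    rw [← hS, mclosure_eq_cl h1 h2 h3, mrank_cl h1 h2 h3]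
  rw [hr]
  simp [map_pow]

end MobiusSide
end BC

/-- Let `M = (E, 𝓘)` be a matroid (ground set the whole finite type
`α`), with `m = r_M(E)`, and let `ℓ` be an injective labeling function. Let `μ` be the
Möbius function of the poset of flats of `M`. Then the polynomial
`χ̃_M = [∅̄ = ∅] · ∑_{F flat} μ(∅̄, F) x^{m − r_M(F)}` satisfies
`χ̃_M = ∑_{F ⊆ E, F contains no broken circuit of M} (−1)^{|F|} x^{m − |F|}`
in `ℤ[x]`. -/
theorem matroid_charPoly_whitney
    {α : Type*} [Fintype α] [DecidableEq α]
    (𝓘 : Finset (Finset α))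
    (h1 : ∅ ∈ 𝓘)
    (h2 : ∀ Y ∈ 𝓘, ∀ Z : Finset α, Z ⊆ Y → Z ∈ 𝓘)
    (h3 : ∀ Y ∈ 𝓘, ∀ Z ∈ 𝓘, Y.card < Z.card → ∃ x ∈ Z \ Y, insert x Y ∈ 𝓘)
    {X : Type*} [LinearOrder X] (ℓ : α → X) (hℓ : Function.Injective ℓ)
    (μ : Finset α → Finset α → ℤ)
    (hμ1 : ∀ T : Finset α, IsFlat 𝓘 T → μ T T = 1)
    (hμ2 : ∀ T S : Finset α, IsFlat 𝓘 T → IsFlat 𝓘 S → T ⊂ S →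
      μ T S = -∑ Z ∈ Finset.univ.filter (fun Z : Finset α => IsFlat 𝓘 Z ∧ T ⊆ Z ∧ Z ⊂ S),
        μ T Z) :
    (if mclosure 𝓘 ∅ = (∅ : Finset α) then
        ∑ F ∈ Finset.univ.filter (fun F : Finset α => IsFlat 𝓘 F),
          Polynomial.C (μ (mclosure 𝓘 ∅) F) *
            Polynomial.X ^ (mrank 𝓘 Finset.univ - mrank 𝓘 F)
      else 0) =
      ∑ F ∈ Finset.univ.filter
          (fun F : Finset α => ∀ K, IsBrokenCircuitM 𝓘 ℓ K → ¬ K ⊆ F),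
        (-1 : Polynomial ℤ) ^ F.card *
          Polynomial.X ^ (mrank 𝓘 Finset.univ - F.card) := by

  by_cases hcl : mclosure 𝓘 ∅ = ∅
  · rw [if_pos hcl]
    letI : LinearOrder α := LinearOrder.lift' ℓ hℓ
    rw [BC.mobius_side h1 h2 h3 hcl μ hμ1 hμ2]
    exact BC.whitney_sum h1 h2 h3 hℓ
  · rw [if_neg hcl]
    obtain ⟨x, hx⟩ := Finset.nonempty_iff_ne_empty.mpr hcl
    have hx' : BC.Spans 𝓘 ∅ x := by
      rw [BC.mclosure_eq_cl h1 h2 h3] at hx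
      simpa [BC.cl] using hx
    have hxI : ({x} : Finset α) ∉ 𝓘 := by
      intro hmem
      have hcard := BC.mrank_indep hmem
      rw [Finset.card_singleton] at hcard
      have h0 : mrank 𝓘 (insert x (∅ : Finset α)) = mrank 𝓘 (∅ : Finset α) := hx'
      have hins : insert x (∅ : Finset α) = {x} := rfl
      rw [hins, hcard, BC.mrank_empty] at h0
      omega
    have hcirc : IsCircuitM 𝓘 {x} := by
      refine ⟨hxI, fun D hD hsub => ?_⟩
      rcases Finset.subset_singleton_iff.mp hsub with rfl | rfl
      · exact absurd h1 hD
      · rfl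
    have hbc : IsBrokenCircuitM 𝓘 ℓ (∅ : Finset α) := by
      refine ⟨{x}, x, hcirc, Finset.mem_singleton_self x, ?_, ?_⟩
      · intro e' he' hne
        exact absurd (Finset.mem_singleton.mp he') hne
      · rw [BC.erase_irrel (fun a b => Classical.propDecidable (a = b)) ‹DecidableEq α›
          ({x} : Finset α) x]
        exact (Finset.erase_singleton x).symm
    have hfe : Finset.univ.filter
        (fun F : Finset α => ∀ K, IsBrokenCircuitM 𝓘 ℓ K → ¬ K ⊆ F) = ∅ := by
      refine Finset.filter_eq_empty_iff.mpr (fun F _ => ?_)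
      push_neg
      exact ⟨∅, hbc, Finset.empty_subset F⟩
    rw [hfe, Finset.sum_empty]
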